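/- Let R be a G-graded ring such that every proper graded ideal of R is graded weakly prime. Then (GN(R))² = 0 and every graded prime ideal of R contains GN(R). -/

import Mathlib

/-- The additive subgroup generated by all products `a * b` with `a ∈ S`, `b ∈ T`.
For two-sided ideals `I`, `J`, `mulClosure I J` is the ideal product `IJ`. -/
def mulClosure {R : Type*} [NonUnitalRing R] (S T : Set R) : AddSubgroup R :=
  AddSubgroup.closure {x | ∃ a ∈ S, ∃ b ∈ T, a * b = x}

/-- A two-sided ideal of a `G`-graded ring is graded if every homogeneous component of
every element of the ideal lies in the ideal. -/
def IsGradedIdeal {G R : Type*} [DecidableEq G] [NonUnitalRing R]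
    (𝒜 : G → AddSubgroup R) [DirectSum.Decomposition 𝒜] (P : TwoSidedIdeal R) : Prop :=
  ∀ x ∈ P, ∀ g : G, (DirectSum.decompose 𝒜 x g : R) ∈ P

/-- A proper graded ideal `P` is graded prime if `IJ ⊆ P` implies `I ⊆ P` or `J ⊆ P`
for all graded ideals `I`, `J`. -/
def IsGradedPrime {G R : Type*} [DecidableEq G] [NonUnitalRing R]
    (𝒜 : G → AddSubgroup R) [DirectSum.Decomposition 𝒜] (P : TwoSidedIdeal R) : Prop :=
  P ≠ ⊤ ∧ IsGradedIdeal 𝒜 P ∧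
    ∀ I J : TwoSidedIdeal R, IsGradedIdeal 𝒜 I → IsGradedIdeal 𝒜 J →
      (mulClosure (I : Set R) (J : Set R) : Set R) ⊆ (P : Set R) → I ≤ P ∨ J ≤ P

/-- A proper graded ideal `P` is graded weakly prime if `0 ≠ IJ ⊆ P` implies `I ⊆ P` or
`J ⊆ P` for all graded ideals `I`, `J`. -/
def IsGradedWeaklyPrime {G R : Type*} [DecidableEq G] [NonUnitalRing R]
    (𝒜 : G → AddSubgroup R) [DirectSum.Decomposition 𝒜] (P : TwoSidedIdeal R) : Prop :=
  P ≠ ⊤ ∧ IsGradedIdeal 𝒜 P ∧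
    ∀ I J : TwoSidedIdeal R, IsGradedIdeal 𝒜 I → IsGradedIdeal 𝒜 J →
      mulClosure (I : Set R) (J : Set R) ≠ ⊥ →
      (mulClosure (I : Set R) (J : Set R) : Set R) ⊆ (P : Set R) → I ≤ P ∨ J ≤ P

/-- `GP(R)`: the graded prime radical, the intersection of all graded prime ideals
(equal to all of `R` if there are no graded prime ideals). -/
def gradedPrimeRadical {G R : Type*} [DecidableEq G] [NonUnitalRing R]
    (𝒜 : G → AddSubgroup R) [DirectSum.Decomposition 𝒜] : Set R :=
  ⋂ P ∈ {P : TwoSidedIdeal R | IsGradedPrime 𝒜 P}, (P : Set R)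

/-- `GN(R)`: the sum of all graded ideals whose square is zero. -/
def gradedNilSum {G R : Type*} [DecidableEq G] [NonUnitalRing R]
    (𝒜 : G → AddSubgroup R) [DirectSum.Decomposition 𝒜] : TwoSidedIdeal R :=
  sSup {I : TwoSidedIdeal R | IsGradedIdeal 𝒜 I ∧ mulClosure (I : Set R) (I : Set R) = ⊥}

section aux
variable {G R : Type*} [DecidableEq G] [NonUnitalRing R]

lemma mulClosure_mono {S S' T T' : Set R} (hS : S ⊆ S') (hT : T ⊆ T') :
    mulClosure S T ≤ mulClosure S' T' :=
  AddSubgroup.closure_mono (fun _x ⟨a, ha, b, hb, h⟩ => ⟨a, hS ha, b, hT hb, h⟩)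

lemma mul_mem_mulClosure {S T : Set R} {a b : R} (ha : a ∈ S) (hb : b ∈ T) :
    a * b ∈ mulClosure S T :=
  AddSubgroup.subset_closure ⟨a, ha, b, hb, rfl⟩

lemma mulClosure_subset {S T : Set R} {I : TwoSidedIdeal R}
    (h : ∀ a ∈ S, ∀ b ∈ T, a * b ∈ I) : (mulClosure S T : Set R) ⊆ (I : Set R) := by
  intro x hx
  induction hx using AddSubgroup.closure_induction with
  | mem x hx => obtain ⟨a, ha, b, hb, rfl⟩ := hx; exact h a ha b hb
  | zero => exact I.zero_mem
  | add x y _ _ hx hy => exact I.add_mem hx hy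
  | neg x _ hx => exact I.neg_mem hx

variable (𝒜 : G → AddSubgroup R) [DirectSum.Decomposition 𝒜]

/-- The `k`-th homogeneous component as an additive group hom. -/
def dcomp (k : G) : R →+ R where
  toFun x := (DirectSum.decompose 𝒜 x k : R)
  map_zero' := by simp
  map_add' x y := by simp

@[simp] lemma dcomp_apply (k : G) (x : R) :
    dcomp 𝒜 k x = (DirectSum.decompose 𝒜 x k : R) := rfl

variable [Mul G]

lemma decompose_mul_mem
    (hmul : ∀ ⦃g h : G⦄ ⦃x y : R⦄, x ∈ 𝒜 g → y ∈ 𝒜 h → x * y ∈ 𝒜 (g * h))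
    {I J : TwoSidedIdeal R}
    (hI : IsGradedIdeal 𝒜 I) (hJ : IsGradedIdeal 𝒜 J)
    {a b : R} (ha : a ∈ I) (hb : b ∈ J) (k : G) :
    (DirectSum.decompose 𝒜 (a * b) k : R) ∈ mulClosure (I : Set R) (J : Set R) := by
  classical
  have hab : a * b = ∑ g ∈ (DirectSum.decompose 𝒜 a).support,
      ∑ h ∈ (DirectSum.decompose 𝒜 b).support,
        (DirectSum.decompose 𝒜 a g : R) * (DirectSum.decompose 𝒜 b h : R) := by
    rw [← Finset.sum_mul_sum, DirectSum.sum_support_decompose,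
      DirectSum.sum_support_decompose]
  have hh : (DirectSum.decompose 𝒜 (a * b) k : R) = dcomp 𝒜 k (a * b) := rfl
  rw [hh, hab, map_sum]
  refine sum_mem (fun g _ => ?_)
  rw [map_sum]
  refine sum_mem (fun h _ => ?_)
  have hgh : (DirectSum.decompose 𝒜 a g : R) * (DirectSum.decompose 𝒜 b h : R) ∈ 𝒜 (g * h) :=
    hmul (SetLike.coe_mem _) (SetLike.coe_mem _)
  rw [dcomp_apply]
  by_cases hk : g * h = k
  · rw [← hk, DirectSum.decompose_of_mem_same 𝒜 hgh]
    exact mul_mem_mulClosure (hI a ha g) (hJ b hb h)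
  · rw [DirectSum.decompose_of_mem_ne 𝒜 hgh hk]
    exact zero_mem _

lemma mulClosure_graded
    (hmul : ∀ ⦃g h : G⦄ ⦃x y : R⦄, x ∈ 𝒜 g → y ∈ 𝒜 h → x * y ∈ 𝒜 (g * h))
    {I J : TwoSidedIdeal R}
    (hI : IsGradedIdeal 𝒜 I) (hJ : IsGradedIdeal 𝒜 J) :
    ∀ x ∈ mulClosure (I : Set R) (J : Set R), ∀ k : G,
      (DirectSum.decompose 𝒜 x k : R) ∈ mulClosure (I : Set R) (J : Set R) := by
  intro x hx
  induction hx using AddSubgroup.closure_induction with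
  | mem x hx => obtain ⟨a, ha, b, hb, rfl⟩ := hx; exact decompose_mul_mem 𝒜 hmul hI hJ ha hb
  | zero =>
      intro k
      rw [show (DirectSum.decompose 𝒜 (0:R) k : R) = dcomp 𝒜 k 0 from rfl, map_zero]
      exact zero_mem _
  | add x y _ _ hx hy =>
      intro k
      rw [show (DirectSum.decompose 𝒜 (x+y) k : R) = dcomp 𝒜 k (x+y) from rfl, map_add]
      exact add_mem (hx k) (hy k)
  | neg x _ hx =>
      intro k
      rw [show (DirectSum.decompose 𝒜 (-x) k : R) = dcomp 𝒜 k (-x) from rfl, map_neg]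
      exact neg_mem (hx k)

/-- Key lemma: if every proper graded ideal is graded weakly prime, then the product of
two square-zero graded ideals is zero. -/
lemma prod_eq_bot
    (hmul : ∀ ⦃g h : G⦄ ⦃x y : R⦄, x ∈ 𝒜 g → y ∈ 𝒜 h → x * y ∈ 𝒜 (g * h))
    (hwp : ∀ P : TwoSidedIdeal R, P ≠ ⊤ → IsGradedIdeal 𝒜 P → IsGradedWeaklyPrime 𝒜 P)
    {I J : TwoSidedIdeal R} (hI : IsGradedIdeal 𝒜 I) (hJ : IsGradedIdeal 𝒜 J)
    (hI2 : mulClosure (I : Set R) (I : Set R) = ⊥)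
    (hJ2 : mulClosure (J : Set R) (J : Set R) = ⊥) :
    mulClosure (I : Set R) (J : Set R) = ⊥ := by
  by_contra hne
  have h0 : (0 : R) ∈ (mulClosure (I : Set R) (J : Set R) : Set R) := zero_mem _
  have hadd : ∀ {x y : R}, x ∈ (mulClosure (I : Set R) (J : Set R) : Set R) →
      y ∈ (mulClosure (I : Set R) (J : Set R) : Set R) →
      x + y ∈ (mulClosure (I : Set R) (J : Set R) : Set R) := fun hx hy => add_mem hx hy
  have hneg : ∀ {x : R}, x ∈ (mulClosure (I : Set R) (J : Set R) : Set R) →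
      -x ∈ (mulClosure (I : Set R) (J : Set R) : Set R) := fun hx => neg_mem hx
  have hml : ∀ {x y : R}, y ∈ (mulClosure (I : Set R) (J : Set R) : Set R) →
      x * y ∈ (mulClosure (I : Set R) (J : Set R) : Set R) := by
    intro x y hy
    induction hy using AddSubgroup.closure_induction with
    | mem y hy =>
        obtain ⟨a, ha, b, hb, rfl⟩ := hy
        rw [← mul_assoc]
        exact mul_mem_mulClosure (I.mul_mem_left x a ha) hb
    | zero => rw [mul_zero]; exact zero_mem _
    | add a b _ _ ha hb => rw [mul_add]; exact add_mem ha hb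
    | neg a _ ha => rw [mul_neg]; exact neg_mem ha
  have hmr : ∀ {x y : R}, x ∈ (mulClosure (I : Set R) (J : Set R) : Set R) →
      x * y ∈ (mulClosure (I : Set R) (J : Set R) : Set R) := by
    intro x y hx
    induction hx using AddSubgroup.closure_induction with
    | mem x hx =>
        obtain ⟨a, ha, b, hb, rfl⟩ := hx
        rw [mul_assoc]
        exact mul_mem_mulClosure ha (J.mul_mem_right b y hb)
    | zero => rw [zero_mul]; exact zero_mem _
    | add a b _ _ ha hb => rw [add_mul]; exact add_mem ha hb
    | neg a _ ha => rw [neg_mul]; exact neg_mem ha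
  set K : TwoSidedIdeal R := TwoSidedIdeal.mk' (mulClosure (I : Set R) (J : Set R))
    h0 hadd hneg hml hmr with hKdef
  have hKcoe : (K : Set R) = (mulClosure (I : Set R) (J : Set R) : Set R) :=
    TwoSidedIdeal.coe_mk' _ h0 hadd hneg hml hmr
  have hKI : (K : Set R) ⊆ (I : Set R) := by
    rw [hKcoe]
    exact mulClosure_subset (fun a ha b _ => I.mul_mem_right a b ha)
  have hKJ : (K : Set R) ⊆ (J : Set R) := by
    rw [hKcoe]
    exact mulClosure_subset (fun a _ b hb => J.mul_mem_left a b hb)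
  have hKne : K ≠ ⊤ := by
    intro hKtop
    apply hne
    have hIuniv : ∀ x : R, x ∈ (I : Set R) := by
      intro x
      exact hKI (show x ∈ K by rw [hKtop]; trivial)
    have : mulClosure (I : Set R) (J : Set R) ≤ mulClosure (I : Set R) (I : Set R) :=
      mulClosure_mono subset_rfl (fun x _ => hIuniv x)
    rw [hI2] at this
    exact le_bot_iff.1 this
  have hKgr : IsGradedIdeal 𝒜 K := by
    intro x hx k
    have hx' : x ∈ mulClosure (I : Set R) (J : Set R) := by
      rw [← SetLike.mem_coe, hKcoe] at hx
      exact hx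
    have := mulClosure_graded 𝒜 hmul hI hJ x hx' k
    rw [← SetLike.mem_coe, hKcoe]
    exact this
  obtain ⟨-, -, hw⟩ := hwp K hKne hKgr
  rcases hw I J hI hJ hne (by rw [hKcoe]) with h | h
  · have hIJ : (I : Set R) ⊆ (J : Set R) := fun x hx => hKJ (h hx)
    have : mulClosure (I : Set R) (J : Set R) ≤ mulClosure (J : Set R) (J : Set R) :=
      mulClosure_mono hIJ subset_rfl
    rw [hJ2] at this
    exact hne (le_bot_iff.1 this)
  · have hJI : (J : Set R) ⊆ (I : Set R) := fun x hx => hKI (h hx)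
    have : mulClosure (I : Set R) (J : Set R) ≤ mulClosure (I : Set R) (I : Set R) :=
      mulClosure_mono subset_rfl hJI
    rw [hI2] at this
    exact hne (le_bot_iff.1 this)

end aux

/-- If every proper graded ideal of `R` is graded weakly prime, then `(GN(R))² = 0` and
every graded prime ideal of `R` contains `GN(R)`. -/
theorem stmt_8 {G R : Type*} [Group G] [DecidableEq G] [NonUnitalRing R]
    (𝒜 : G → AddSubgroup R) [DirectSum.Decomposition 𝒜]
    (hmul : ∀ ⦃g h : G⦄ ⦃x y : R⦄, x ∈ 𝒜 g → y ∈ 𝒜 h → x * y ∈ 𝒜 (g * h))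
    (hwp : ∀ P : TwoSidedIdeal R, P ≠ ⊤ → IsGradedIdeal 𝒜 P → IsGradedWeaklyPrime 𝒜 P) :
    mulClosure ((gradedNilSum 𝒜 : TwoSidedIdeal R) : Set R)
      ((gradedNilSum 𝒜 : TwoSidedIdeal R) : Set R) = ⊥ ∧
    ∀ P : TwoSidedIdeal R, IsGradedPrime 𝒜 P → gradedNilSum 𝒜 ≤ P := by
  classical
  set U : Set R :=
    ⋃ I ∈ {I : TwoSidedIdeal R | IsGradedIdeal 𝒜 I ∧
      mulClosure (I : Set R) (I : Set R) = ⊥}, (I : Set R) with hU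
  -- all pairwise products of elements of `closure U` vanish
  have hprod0 : ∀ x ∈ AddSubgroup.closure U, ∀ y ∈ AddSubgroup.closure U, x * y = 0 := by
    intro x hx
    induction hx using AddSubgroup.closure_induction with
    | mem x hxm =>
        intro y hy
        induction hy using AddSubgroup.closure_induction with
        | mem y hym =>
            obtain ⟨I, hIS, hxI⟩ := Set.mem_iUnion₂.1 hxm
            obtain ⟨J, hJS, hyJ⟩ := Set.mem_iUnion₂.1 hym
            have hbot := prod_eq_bot 𝒜 hmul hwp hIS.1 hJS.1 hIS.2 hJS.2
            have hxy : x * y ∈ mulClosure (I : Set R) (J : Set R) :=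
              mul_mem_mulClosure hxI hyJ
            rw [hbot] at hxy
            exact AddSubgroup.mem_bot.1 hxy
        | zero => exact mul_zero x
        | add a b _ _ ha hb => rw [mul_add, ha, hb, add_zero]
        | neg a _ ha => rw [mul_neg, ha, neg_zero]
    | zero => intro y _; exact zero_mul y
    | add a b _ _ ha hb => intro y hy; rw [add_mul, ha y hy, hb y hy, add_zero]
    | neg a _ ha => intro y hy; rw [neg_mul, ha y hy, neg_zero]
  -- the two-sided ideal with carrier `closure U`
  have hml : ∀ {x y : R}, y ∈ (AddSubgroup.closure U : Set R) →
      x * y ∈ (AddSubgroup.closure U : Set R) := by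
    intro x y hy
    induction hy using AddSubgroup.closure_induction with
    | mem y hym =>
        obtain ⟨I, hIS, hyI⟩ := Set.mem_iUnion₂.1 hym
        exact AddSubgroup.subset_closure
          (Set.mem_iUnion₂.2 ⟨I, hIS, I.mul_mem_left x y hyI⟩)
    | zero => rw [mul_zero]; exact zero_mem _
    | add a b _ _ ha hb => rw [mul_add]; exact add_mem ha hb
    | neg a _ ha => rw [mul_neg]; exact neg_mem ha
  have hmr : ∀ {x y : R}, x ∈ (AddSubgroup.closure U : Set R) →
      x * y ∈ (AddSubgroup.closure U : Set R) := by
    intro x y hx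
    induction hx using AddSubgroup.closure_induction with
    | mem x hxm =>
        obtain ⟨I, hIS, hxI⟩ := Set.mem_iUnion₂.1 hxm
        exact AddSubgroup.subset_closure
          (Set.mem_iUnion₂.2 ⟨I, hIS, I.mul_mem_right x y hxI⟩)
    | zero => rw [zero_mul]; exact zero_mem _
    | add a b _ _ ha hb => rw [add_mul]; exact add_mem ha hb
    | neg a _ ha => rw [neg_mul]; exact neg_mem ha
  have h0 : (0 : R) ∈ (AddSubgroup.closure U : Set R) := zero_mem _
  have hadd : ∀ {x y : R}, x ∈ (AddSubgroup.closure U : Set R) →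
      y ∈ (AddSubgroup.closure U : Set R) → x + y ∈ (AddSubgroup.closure U : Set R) :=
    fun hx hy => add_mem hx hy
  have hneg : ∀ {x : R}, x ∈ (AddSubgroup.closure U : Set R) →
      -x ∈ (AddSubgroup.closure U : Set R) := fun hx => neg_mem hx
  set T : TwoSidedIdeal R := TwoSidedIdeal.mk' (AddSubgroup.closure U : Set R)
    h0 hadd hneg hml hmr with hTdef
  have hTcoe : (T : Set R) = (AddSubgroup.closure U : Set R) :=
    TwoSidedIdeal.coe_mk' _ h0 hadd hneg hml hmr
  have hGNT : gradedNilSum 𝒜 ≤ T := by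
    refine sSup_le (fun I hIS => TwoSidedIdeal.le_iff.2 ?_)
    intro x hx
    rw [hTcoe]
    exact AddSubgroup.subset_closure (Set.mem_iUnion₂.2 ⟨I, hIS, hx⟩)
  have hGNmem : ∀ x ∈ gradedNilSum 𝒜, x ∈ AddSubgroup.closure U := by
    intro x hx
    have := hGNT hx
    rwa [← SetLike.mem_coe, hTcoe] at this
  constructor
  · refine le_bot_iff.1 ((AddSubgroup.closure_le _).2 ?_)
    intro x hx
    obtain ⟨a, ha, b, hb, rfl⟩ := hx
    have : a * b = 0 := hprod0 a (hGNmem a ha) b (hGNmem b hb)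
    rw [this]
    exact zero_mem _
  · intro P hP
    obtain ⟨_, _, hPprime⟩ := hP
    refine sSup_le (fun I hIS => ?_)
    have hsub : (mulClosure (I : Set R) (I : Set R) : Set R) ⊆ (P : Set R) := by
      rw [hIS.2]
      intro x hx
      rw [AddSubgroup.coe_bot, Set.mem_singleton_iff] at hx
      rw [hx]
      exact P.zero_mem
    rcases hPprime I I hIS.1 hIS.1 hsub with h | h <;> exact h
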